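/- Let $p$ be a prime and let $m$ be a natural number with base-$p$ digits $m_0, m_1, \ldots, m_q$ (so $m = \sum_j m_j p^j$ with $0 \leq m_j < p$). Then the multinomial coefficient $m! / \prod_j ((p^j)!)^{m_j}$ is congruent to $\prod_j m_j!$ modulo $p$. -/

import Mathlib

open Finset

private theorem choose_mul_p_modEq (p a b : ℕ) (hp : p.Prime) :
    Nat.ModEq p ((p * a).choose (p * b)) (a.choose b) := by
  haveI := Fact.mk hp
  have h := Choose.choose_modEq_choose_mod_mul_choose_div_nat (p := p) (n := p * a) (k := p * b)
  simpa [Nat.mul_mod_right, Nat.mul_div_cancel_left _ hp.pos] using h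

private theorem choose_mul_pow_modEq (p t a b : ℕ) (hp : p.Prime) :
    Nat.ModEq p ((p ^ t * a).choose (p ^ t * b)) (a.choose b) := by
  induction t generalizing a b with
  | zero => simpa using Nat.ModEq.refl _
  | succ t ih =>
    have h1 : p ^ (t + 1) * a = p ^ t * (p * a) := by ring
    have h2 : p ^ (t + 1) * b = p ^ t * (p * b) := by ring
    rw [h1, h2]
    exact (ih (p * a) (p * b)).trans (choose_mul_p_modEq p a b hp)

private theorem lemB (p t l : ℕ) (hp : p.Prime) :
    ∀ s, s < p → ∃ b : ℕ,
      (p ^ (t + 1) * l + s * p ^ t).factorial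
        = b * ((p ^ t).factorial) ^ s * (p ^ (t + 1) * l).factorial
      ∧ Nat.ModEq p b s.factorial := by
  intro s
  induction s with
  | zero => exact fun _ => ⟨1, by simp, by simp [Nat.ModEq]⟩
  | succ s ih =>
    intro hs
    obtain ⟨b, hb, hb'⟩ := ih (Nat.lt_of_succ_lt hs)
    set n := p ^ (t + 1) * l + s * p ^ t with hn
    refine ⟨(n + p ^ t).choose (p ^ t) * b, ?_, ?_⟩
    · have key : (n + p ^ t).choose (p ^ t) * n.factorial * (p ^ t).factorial
          = (n + p ^ t).factorial := Nat.add_choose_mul_factorial_mul_factorial n (p ^ t)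
      have harg : p ^ (t + 1) * l + (s + 1) * p ^ t = n + p ^ t := by rw [hn]; ring
      rw [harg, ← key, hb, pow_succ]
      ring
    · have hC : Nat.ModEq p ((n + p ^ t).choose (p ^ t)) (s + 1) := by
        have h1 : n + p ^ t = p ^ t * (p * l + (s + 1)) := by rw [hn]; ring
        have h2 : p ^ t = p ^ t * 1 := by ring
        calc (n + p ^ t).choose (p ^ t)
            = (p ^ t * (p * l + (s + 1))).choose (p ^ t * 1) := by rw [← h1, ← h2]
          _ ≡ (p * l + (s + 1)).choose 1 [MOD p] := choose_mul_pow_modEq p t _ 1 hp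
          _ = p * l + (s + 1) := Nat.choose_one_right _
          _ ≡ 0 + (s + 1) [MOD p] := Nat.ModEq.add_right _ (Nat.modEq_zero_iff_dvd.mpr ⟨l, rfl⟩)
          _ = s + 1 := by ring
      have := hC.mul hb'
      simpa [Nat.factorial_succ] using this

private theorem lemG (p : ℕ) (hp : p.Prime) (m : ℕ) : ∀ t, ∃ g : ℕ,
    (p ^ t * m).factorial
      = g * ∏ i ∈ range (Nat.digits p m).length,
          ((p ^ (t + i)).factorial) ^ ((Nat.digits p m).getD i 0)
    ∧ Nat.ModEq p g
        (∏ i ∈ range (Nat.digits p m).length, ((Nat.digits p m).getD i 0).factorial) := by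
  induction m using Nat.strong_induction_on with
  | _ m ih =>
    intro t
    rcases Nat.eq_zero_or_pos m with rfl | hm
    · exact ⟨1, by simp, by simp [Nat.ModEq]⟩
    · have hp1 : 1 < p := hp.one_lt
      have hd : Nat.digits p m = m % p :: Nat.digits p (m / p) := Nat.digits_def' hp1 hm
      obtain ⟨g₁, hg₁, hg₁'⟩ := ih (m / p) (Nat.div_lt_self hm hp1) (t + 1)
      obtain ⟨b, hb, hb'⟩ := lemB p t (m / p) hp (m % p) (Nat.mod_lt m hp.pos)
      refine ⟨b * g₁, ?_, ?_⟩
      · have harg : p ^ t * m = p ^ (t + 1) * (m / p) + (m % p) * p ^ t := by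
          conv_lhs => rw [← Nat.div_add_mod m p]
          ring
        rw [harg, hb, hg₁, hd]
        rw [List.length_cons, Finset.prod_range_succ']
        simp only [List.getD_cons_succ, List.getD_cons_zero, Nat.add_zero]
        have hre : ∀ i : ℕ, t + (i + 1) = t + 1 + i := by omega
        conv_rhs => rw [Finset.prod_congr rfl
          (fun i _ => by rw [hre i] :
            ∀ i ∈ range (Nat.digits p (m / p)).length,
              ((p ^ (t + (i + 1))).factorial) ^ ((Nat.digits p (m / p)).getD i 0)
              = ((p ^ (t + 1 + i)).factorial) ^ ((Nat.digits p (m / p)).getD i 0))]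
        ring
      · rw [hd, List.length_cons, Finset.prod_range_succ']
        simp only [List.getD_cons_succ, List.getD_cons_zero]
        exact (hb'.mul hg₁').trans (by rw [Nat.mul_comm])

theorem multinomial_digits_congr (p m : ℕ) (hp : p.Prime) :
    Nat.ModEq p
      (m.factorial /
        ∏ j ∈ Finset.range (Nat.digits p m).length,
          ((p ^ j).factorial) ^ ((Nat.digits p m).getD j 0))
      (∏ j ∈ Finset.range (Nat.digits p m).length, ((Nat.digits p m).getD j 0).factorial) := by
  obtain ⟨g, hg, hg'⟩ := lemG p hp m 0
  simp only [pow_zero, one_mul, Nat.zero_add] at hg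
  have hD : 0 < ∏ j ∈ Finset.range (Nat.digits p m).length,
      ((p ^ j).factorial) ^ ((Nat.digits p m).getD j 0) :=
    Finset.prod_pos fun j _ => pow_pos (Nat.factorial_pos _) _
  rw [hg, Nat.mul_div_cancel g hD]
  exact hg'
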